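/- arXiv:1807.05263 — 2 statements merged into one kernel-verified Lean document; each statement's English description precedes it below -/
import Mathlib

section
/- Let 𝒜 be a locally λ-presentable category and T : 𝒜 → 𝒜 a λ-accessible functor. Let A, P, Q be λ-presentable objects of 𝒜, p : P → T A, q : P → Q, and let U together with f : T A → U and g : Q → U be the pushout of q along p. Then the object (A, U, f) of the comma category T/𝒜 is λ-presentable. -/
universe v u

open CategoryTheory Limits Opposite

section Helpers

variable {E : Type u} [Category.{v} E] {D : Type v} [PartialOrder D]
  {G : D ⥤ E} {c : Cocone G}

lemma exists_fac_of_preserves (hc : IsColimit c) {X : E}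
    (hX : PreservesColimitsOfShape D (coyoneda.obj (op X))) (h : X ⟶ c.pt) :
    ∃ (d : D) (u : X ⟶ G.obj d), u ≫ c.ι.app d = h := by
  have hc' := isColimitOfPreserves (coyoneda.obj (op X)) hc
  obtain ⟨d, u, hu⟩ := Types.jointly_surjective _ hc' h
  exact ⟨d, u, hu⟩

lemma exists_eq_of_preserves [IsFilteredOrEmpty D] (hc : IsColimit c) {X : E}
    (hX : PreservesColimitsOfShape D (coyoneda.obj (op X))) {d : D} {u v : X ⟶ G.obj d}
    (huv : u ≫ c.ι.app d = v ≫ c.ι.app d) :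
    ∃ (d' : D) (hdd : d ≤ d'), u ≫ G.map (homOfLE hdd) = v ≫ G.map (homOfLE hdd) := by
  have hc' := isColimitOfPreserves (coyoneda.obj (op X)) hc
  obtain ⟨k, f₁, f₂, hk⟩ := (Types.FilteredColimit.isColimit_eq_iff _ hc'
    (xi := u) (xj := v)).mp huv
  obtain rfl : f₁ = f₂ := Subsingleton.elim _ _
  exact ⟨k, leOfHom f₁, by exact hk⟩

end Helpers

/-- A poset is `κ`-directed if every subset of cardinality `< κ` has an upper bound. -/
def IsCardinalDirected (κ : Cardinal.{v}) (D : Type v) [Preorder D] : Prop :=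
  ∀ S : Set D, Cardinal.mk S < κ → ∃ b : D, ∀ s ∈ S, s ≤ b

variable (C : Type u) [Category.{v} C]

/-- An object `X` is `κ`-presentable if `Hom(X, -)` preserves colimits indexed by
`κ`-directed posets. -/
def IsPresentableObj (κ : Cardinal.{v}) (X : C) : Prop :=
  ∀ (D : Type v) [PartialOrder D], IsCardinalDirected κ D →
    Nonempty (PreservesColimitsOfShape D (coyoneda.obj (op X)))

/-- A functor is `κ`-accessible (between categories that are assumed accessible) if it
preserves colimits indexed by `κ`-directed posets. -/
def PreservesCardinalDirectedColimits {C' : Type*} [Category.{v} C'] (κ : Cardinal.{v})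
    (T : C ⥤ C') : Prop :=
  ∀ (D : Type v) [PartialOrder D], IsCardinalDirected κ D →
    Nonempty (PreservesColimitsOfShape D T)

/-- A category is locally `κ`-presentable if it is cocomplete and has a set of
`κ`-presentable objects generating it under `κ`-directed colimits. -/
def IsLocallyPresentable (κ : Cardinal.{v}) : Prop :=
  HasColimitsOfSize.{v, v} C ∧
  ∃ G : Set C, Small.{v} G ∧ (∀ X ∈ G, IsPresentableObj C κ X) ∧
    ∀ X : C, ∃ (D : Type v) (_ : PartialOrder D), IsCardinalDirected κ D ∧
      ∃ (F : D ⥤ C) (c : Cocone F), (∀ d, F.obj d ∈ G) ∧ c.pt = X ∧ Nonempty (IsColimit c)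

/-- If `A`, `P`, `Q` are `κ`-presentable, `p : P ⟶ T A`, `q : P ⟶ Q`, and `U` with
`f : T A ⟶ U`, `g : Q ⟶ U` is the pushout of `q` along `p`, then the object `(A, U, f)`
of the comma category `T/𝒜` is `κ`-presentable. -/
theorem pushout_object_isPresentable (κ : Cardinal.{v}) (hκ : κ.IsRegular)
    (hC : IsLocallyPresentable C κ) (T : C ⥤ C)
    (hT : PreservesCardinalDirectedColimits C κ T)
    (A P Q : C) (hA : IsPresentableObj C κ A) (hP : IsPresentableObj C κ P)
    (hQ : IsPresentableObj C κ Q)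
    (p : P ⟶ T.obj A) (q : P ⟶ Q) (U : C) (f : T.obj A ⟶ U) (g : Q ⟶ U)
    (hpo : IsPushout p q f g) :
    IsPresentableObj (Comma T (𝟭 C)) κ
      ({ left := A, right := U, hom := f } : Comma T (𝟭 C)) := by
  intro D _ hD
  have hne : Nonempty D := by
    obtain ⟨b, -⟩ := hD ∅ (lt_of_eq_of_lt (Cardinal.mk_emptyCollection D) hκ.pos)
    exact ⟨b⟩
  have hdir : IsDirected D (· ≤ ·) := ⟨fun a b => by
    obtain ⟨u, hu⟩ := hD {a, b}
      (((Set.finite_singleton b).insert a).lt_aleph0.trans_le hκ.aleph0_le)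
    exact ⟨u, hu a (by simp), hu b (by simp)⟩⟩
  haveI : HasColimitsOfSize.{v, v} C := hC.1
  obtain ⟨hTpres⟩ := hT D hD
  obtain ⟨hAp⟩ := hA D hD
  obtain ⟨hPp⟩ := hP D hD
  obtain ⟨hQp⟩ := hQ D hD
  set X : Comma T (𝟭 C) := { left := A, right := U, hom := f } with hX
  refine ⟨⟨fun {F} => ⟨fun {c} hc => ⟨?_⟩⟩⟩⟩
  -- componentwise colimits
  have t₁ := colimit.isColimit (F ⋙ Comma.fst T (𝟭 C))
  have t₂ := colimit.isColimit (F ⋙ Comma.snd T (𝟭 C))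
  have hc0 : IsColimit (Comma.coconeOfPreserves F t₁ (colimit.cocone _)) :=
    Comma.coconeOfPreservesIsColimit F t₁ t₂
  have e := IsColimit.uniqueUpToIso hc0 hc
  have hcl : IsColimit ((Comma.fst T (𝟭 C)).mapCocone c) :=
    IsColimit.ofIsoColimit
      (IsColimit.ofIsoColimit t₁ (Cocones.ext (Iso.refl _)
        (by intro j; simp [Comma.coconeOfPreserves])))
      ((Cocones.functoriality F (Comma.fst T (𝟭 C))).mapIso e)
  have hcr : IsColimit ((Comma.snd T (𝟭 C)).mapCocone c) :=
    IsColimit.ofIsoColimit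
      (IsColimit.ofIsoColimit t₂ (Cocones.ext (Iso.refl _)
        (by intro j; simp [Comma.coconeOfPreserves])))
      ((Cocones.functoriality F (Comma.snd T (𝟭 C))).mapIso e)
  -- abbreviations for naturality
  have wl : ∀ {i j : D} (hij : i ≤ j),
      (F.map (homOfLE hij)).left ≫ (c.ι.app j).left = (c.ι.app i).left := by
    intro i j hij
    rw [← Comma.comp_left, c.w]
  have wr : ∀ {i j : D} (hij : i ≤ j),
      (F.map (homOfLE hij)).right ≫ (c.ι.app j).right = (c.ι.app i).right := by
    intro i j hij
    rw [← Comma.comp_right, c.w]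
  have ww : ∀ d : D, T.map (c.ι.app d).left ≫ c.pt.hom = (F.obj d).hom ≫ (c.ι.app d).right :=
    fun d => by simpa using (c.ι.app d).w
  have wF : ∀ {i j : D} (hij : i ≤ j),
      T.map (F.map (homOfLE hij)).left ≫ (F.obj j).hom
        = (F.obj i).hom ≫ (F.map (homOfLE hij)).right :=
    fun hij => by simpa using (F.map (homOfLE ‹_ ≤ _›)).w
  apply Types.FilteredColimit.isColimitOf
  · -- surjectivity
    intro x
    obtain ⟨d₀, u, hu⟩ := exists_fac_of_preserves hcl hAp (x.left)
    obtain ⟨d₁, v, hv⟩ := exists_fac_of_preserves hcr hQp (g ≫ x.right)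
    obtain ⟨d₂, h₀₂, h₁₂⟩ := directed_of (· ≤ ·) d₀ d₁
    simp only [Functor.mapCocone_ι_app, Comma.fst_map, Comma.snd_map] at hu hv
    set a : T.obj A ⟶ (F.obj d₂).right :=
      T.map u ≫ (F.obj d₀).hom ≫ (F.map (homOfLE h₀₂)).right with ha
    set b : Q ⟶ (F.obj d₂).right := v ≫ (F.map (homOfLE h₁₂)).right with hb
    have key : (p ≫ a) ≫ ((Comma.snd T (𝟭 C)).mapCocone c).ι.app d₂
        = (q ≫ b) ≫ ((Comma.snd T (𝟭 C)).mapCocone c).ι.app d₂ := by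
      have hTA : T.map u ≫ T.map (c.ι.app d₀).left = T.map x.left := by
        rw [← T.map_comp, hu]
      simp only [Functor.mapCocone_ι_app, Comma.snd_map, ha, hb, Category.assoc,
        wr h₀₂, wr h₁₂]
      rw [← ww d₀, reassoc_of% hTA]
      have hxw : T.map x.left ≫ c.pt.hom = f ≫ x.right := by simpa [-CommaMorphism.w] using x.w
      rw [hxw, hv]
      simp only [← Category.assoc, hpo.w]
    obtain ⟨d₃, h₂₃, hpq⟩ := exists_eq_of_preserves hcr hPp key
    simp only [Functor.comp_map, Comma.snd_map, Category.assoc] at hpq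
    set a' : T.obj A ⟶ (F.obj d₃).right := a ≫ (F.map (homOfLE h₂₃)).right
    set b' : Q ⟶ (F.obj d₃).right := b ≫ (F.map (homOfLE h₂₃)).right
    have hpq' : p ≫ a' = q ≫ b' := by simpa [a', b'] using hpq
    refine ⟨d₃, { left := u ≫ (F.map (homOfLE h₀₂)).left ≫ (F.map (homOfLE h₂₃)).left,
                  right := hpo.desc a' b' hpq', w := ?_ }, ?_⟩
    · -- w condition
      simp only [Functor.id_map, T.map_comp, Category.assoc, hpo.inl_desc]
      rw [wF h₂₃, ← Category.assoc (T.map (F.map (homOfLE h₀₂)).left), wF h₀₂]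
      simp [a', ha, Category.assoc]
    · -- factorization
      show x = _ ≫ c.ι.app d₃
      symm
      apply CommaMorphism.ext
      · simp only [Comma.comp_left, Category.assoc, wl h₂₃, wl h₀₂]
        exact hu
      · simp only [Comma.comp_right]
        apply hpo.hom_ext
        · rw [← Category.assoc, hpo.inl_desc]
          simp only [a', ha, Category.assoc, wr h₂₃, wr h₀₂]
          rw [← ww d₀, ← Category.assoc, ← T.map_comp, hu]
          simpa [-CommaMorphism.w] using x.w
        · rw [← Category.assoc, hpo.inr_desc]
          simp only [b', hb, Category.assoc, wr h₂₃, wr h₁₂]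
          exact hv
  · -- injectivity
    intro i j xi xj hij
    obtain ⟨k₀, hik, hjk⟩ := directed_of (· ≤ ·) i j
    set xi' : X ⟶ F.obj k₀ := xi ≫ F.map (homOfLE hik)
    set xj' : X ⟶ F.obj k₀ := xj ≫ F.map (homOfLE hjk)
    have hι : xi' ≫ c.ι.app k₀ = xj' ≫ c.ι.app k₀ := by
      simp only [xi', xj', Category.assoc, c.w]
      simpa using hij
    -- left components
    have hl : xi'.left ≫ ((Comma.fst T (𝟭 C)).mapCocone c).ι.app k₀
        = xj'.left ≫ ((Comma.fst T (𝟭 C)).mapCocone c).ι.app k₀ := by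
      simpa using congrArg CommaMorphism.left hι
    obtain ⟨k₁, h₀₁, hleft⟩ := exists_eq_of_preserves hcl hAp hl
    simp only [Functor.comp_map, Comma.fst_map] at hleft
    -- g components
    have hg : (g ≫ xi'.right) ≫ ((Comma.snd T (𝟭 C)).mapCocone c).ι.app k₀
        = (g ≫ xj'.right) ≫ ((Comma.snd T (𝟭 C)).mapCocone c).ι.app k₀ := by
      have := congrArg CommaMorphism.right hι
      simp only [Comma.comp_right] at this
      simp [Category.assoc, this]
    obtain ⟨k₂, h₀₂, hgr⟩ := exists_eq_of_preserves hcr hQp hg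
    simp only [Functor.comp_map, Comma.snd_map, Category.assoc] at hgr
    obtain ⟨k₃, h₁₃, h₂₃⟩ := directed_of (· ≤ ·) k₁ k₂
    have h₀₃ : k₀ ≤ k₃ := le_trans h₀₁ h₁₃
    have hmap : ∀ {l : D} (h₁ : k₀ ≤ l) (h₂ : l ≤ k₃),
        F.map (homOfLE h₀₃) = F.map (homOfLE h₁) ≫ F.map (homOfLE h₂) := by
      intro l h₁ h₂
      rw [← F.map_comp, homOfLE_comp]
    have hleft₃ : xi'.left ≫ (F.map (homOfLE h₀₃)).left
        = xj'.left ≫ (F.map (homOfLE h₀₃)).left := by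
      rw [hmap h₀₁ h₁₃]
      simp only [Comma.comp_left, ← Category.assoc, hleft]
    have main : xi' ≫ F.map (homOfLE h₀₃) = xj' ≫ F.map (homOfLE h₀₃) := by
      apply CommaMorphism.ext
      · simpa using hleft₃
      · simp only [Comma.comp_right]
        apply hpo.hom_ext
        · have wx : ∀ (m : X ⟶ F.obj k₀),
              f ≫ m.right ≫ (F.map (homOfLE h₀₃)).right
                = T.map (m.left ≫ (F.map (homOfLE h₀₃)).left) ≫ (F.obj k₃).hom := by
            intro m
            have wm : T.map m.left ≫ (F.obj k₀).hom = f ≫ m.right := by simpa [-CommaMorphism.w] using m.w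
            rw [← Category.assoc, ← wm, Category.assoc, ← wF h₀₃, T.map_comp, Category.assoc]
          rw [wx xi', wx xj', hleft₃]
        · rw [hmap h₀₂ h₂₃]
          simp only [Comma.comp_right, ← Category.assoc] at hgr ⊢
          rw [hgr]
    have hsplit : ∀ {l : D} (h : l ≤ k₀) (m : X ⟶ F.obj l),
        m ≫ F.map (homOfLE (le_trans h h₀₃))
          = (m ≫ F.map (homOfLE h)) ≫ F.map (homOfLE h₀₃) := by
      intro l h m
      rw [Category.assoc, ← F.map_comp, homOfLE_comp]
    refine ⟨k₃, homOfLE (le_trans hik h₀₃), homOfLE (le_trans hjk h₀₃), ?_⟩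
    show xi ≫ F.map _ = xj ≫ F.map _
    rw [hsplit hik xi, hsplit hjk xj]
    exact main
end

section
/- Let 𝒜 be a locally λ-presentable category and T : 𝒜 → 𝒜 a functor that preserves λ-presentable objects and λ-directed colimits. Then the comma category 𝒜/T = Id ↓ T (objects: triples (A, B, f : A → T B)) is locally λ-presentable. -/
universe v u

open CategoryTheory Limits Opposite

namespace Scratch
variable {C : Type u} [Category.{v} C]

lemma cardDirected_nonempty {κ : Cardinal.{v}} (hκ : κ.IsRegular) {D : Type v}
    [Preorder D] (hD : IsCardinalDirected κ D) : Nonempty D := by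
  obtain ⟨b, -⟩ := hD ∅ (by simpa using hκ.pos)
  exact ⟨b⟩

lemma cardDirected_pair {κ : Cardinal.{v}} (hκ : κ.IsRegular) {D : Type v}
    [Preorder D] (hD : IsCardinalDirected κ D) (a b : D) : ∃ c, a ≤ c ∧ b ≤ c := by
  obtain ⟨c, hc⟩ := hD {a, b} ((Set.toFinite _).lt_aleph0.trans_le hκ.aleph0_le)
  exact ⟨c, hc a (by simp), hc b (by simp)⟩

lemma cardDirected_isDirected {κ : Cardinal.{v}} (hκ : κ.IsRegular) {D : Type v}
    [Preorder D] (hD : IsCardinalDirected κ D) : IsDirected D (· ≤ ·) :=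
  ⟨fun a b => by obtain ⟨c, h1, h2⟩ := cardDirected_pair hκ hD a b; exact ⟨c, h1, h2⟩⟩

lemma exists_factor {D : Type v} [PartialOrder D] {F : D ⥤ C} {c : Cocone F}
    (hc : IsColimit c) {X : C} (hX : PreservesColimitsOfShape D (coyoneda.obj (op X)))
    (u : X ⟶ c.pt) : ∃ (d : D) (v : X ⟶ F.obj d), v ≫ c.ι.app d = u := by
  obtain ⟨d, v, hv⟩ := Types.jointly_surjective _
    (isColimitOfPreserves (coyoneda.obj (op X)) hc) u
  exact ⟨d, v, hv⟩

lemma exists_eq_stage {D : Type v} [PartialOrder D] (hκ : Nonempty D)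
    [IsDirected D (· ≤ ·)] {F : D ⥤ C} {c : Cocone F}
    (hc : IsColimit c) {X : C} (hX : PreservesColimitsOfShape D (coyoneda.obj (op X)))
    {d : D} (u v : X ⟶ F.obj d) (h : u ≫ c.ι.app d = v ≫ c.ι.app d) :
    ∃ (d' : D) (hdd : d ≤ d'), u ≫ F.map (homOfLE hdd) = v ≫ F.map (homOfLE hdd) := by
  haveI : Nonempty D := hκ
  have hc' := isColimitOfPreserves (coyoneda.obj (op X)) hc
  obtain ⟨k, f, g, hk⟩ := (Types.FilteredColimit.isColimit_eq_iff
    (F ⋙ coyoneda.obj (op X)) hc' (i := d) (j := d)).1 h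
  obtain rfl : f = g := Subsingleton.elim f g
  exact ⟨k, leOfHom f, by simpa [Subsingleton.elim (homOfLE (leOfHom f)) f] using hk⟩

variable (T : C ⥤ C)
variable {E D : Type v} [PartialOrder E] [PartialOrder D]
variable (FA : E ⥤ C) (FB : D ⥤ C) (a : Cocone FA) (b : Cocone FB) (f : a.pt ⟶ T.obj b.pt)

structure GenIdx where
  e : E
  d : D
  g : FA.obj e ⟶ T.obj (FB.obj d)
  w : g ≫ T.map (b.ι.app d) = a.ι.app e ≫ f

namespace GenIdx
variable {T FA FB a b f}

def LE' (p q : GenIdx T FA FB a b f) : Prop :=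
  ∃ (he : p.e ≤ q.e) (hd : p.d ≤ q.d),
    p.g ≫ T.map (FB.map (homOfLE hd)) = FA.map (homOfLE he) ≫ q.g

lemma LE'.refl (p : GenIdx T FA FB a b f) : LE' p p :=
  ⟨le_refl _, le_refl _, by
    rw [show homOfLE (le_refl p.d) = 𝟙 p.d from rfl, show homOfLE (le_refl p.e) = 𝟙 p.e from rfl]
    simp⟩

lemma LE'.trans {p q r : GenIdx T FA FB a b f} (h : LE' p q) (h' : LE' q r) : LE' p r := by
  obtain ⟨he, hd, hw⟩ := h
  obtain ⟨he', hd', hw'⟩ := h'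
  refine ⟨he.trans he', hd.trans hd', ?_⟩
  rw [show homOfLE (he.trans he') = homOfLE he ≫ homOfLE he' from rfl,
    show homOfLE (hd.trans hd') = homOfLE hd ≫ homOfLE hd' from rfl]
  simp only [Functor.map_comp, Category.assoc]
  rw [← Category.assoc, hw, Category.assoc, hw']

lemma LE'.antisymm {p q : GenIdx T FA FB a b f} (h : LE' p q) (h' : LE' q p) : p = q := by
  obtain ⟨he, hd, hw⟩ := h
  obtain ⟨he', hd', hw'⟩ := h'
  obtain ⟨pe, pd, pg, pw⟩ := p
  obtain ⟨qe, qd, qg, qw⟩ := q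
  dsimp at he hd he' hd' hw hw'
  obtain rfl : pe = qe := le_antisymm he he'
  obtain rfl : pd = qd := le_antisymm hd hd'
  obtain rfl : pg = qg := by
    rw [show homOfLE hd = 𝟙 pd from rfl, show homOfLE he = 𝟙 pe from rfl] at hw
    simpa using hw
  rfl

instance : PartialOrder (GenIdx T FA FB a b f) where
  le := LE'
  le_refl := LE'.refl
  le_trans _ _ _ := LE'.trans
  le_antisymm _ _ := LE'.antisymm

lemma le_e {p q : GenIdx T FA FB a b f} (h : p ≤ q) : p.e ≤ q.e := by
  obtain ⟨he, -, -⟩ := h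
  exact he

lemma le_d {p q : GenIdx T FA FB a b f} (h : p ≤ q) : p.d ≤ q.d := by
  obtain ⟨-, hd, -⟩ := h
  exact hd

lemma le_w {p q : GenIdx T FA FB a b f} (h : p ≤ q) :
    p.g ≫ T.map (FB.map (homOfLE (le_d h))) = FA.map (homOfLE (le_e h)) ≫ q.g := by
  obtain ⟨he, hd, hw⟩ := h
  exact hw

end GenIdx

/-- The canonical diagram in the comma category indexed by `GenIdx`. -/
@[simps]
def genDiagram : GenIdx T FA FB a b f ⥤ Comma (𝟭 C) T where
  obj p := { left := FA.obj p.e, right := FB.obj p.d, hom := p.g }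
  map {p q} h :=
    { left := FA.map (homOfLE (GenIdx.le_e (leOfHom h)))
      right := FB.map (homOfLE (GenIdx.le_d (leOfHom h)))
      w := by simpa using (GenIdx.le_w (leOfHom h)).symm }
  map_id p := by
    apply CommaMorphism.ext <;> simp
  map_comp {p q r} h h' := by
    apply CommaMorphism.ext <;> · dsimp
                                  rw [← Functor.map_comp]
                                  rfl

/-- The canonical cocone on the canonical diagram. -/
@[simps]
def genCocone : Cocone (genDiagram T FA FB a b f) where
  pt := { left := a.pt, right := b.pt, hom := f }
  ι :=
    { app := fun p =>
        { left := a.ι.app p.e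
          right := b.ι.app p.d
          w := by exact p.w.symm }
      naturality := fun p q h => by
        apply CommaMorphism.ext <;> simp [genDiagram] }


section GenMain
variable {C : Type u} [Category.{v} C] {T : C ⥤ C}
variable {E D : Type v} [PartialOrder E] [PartialOrder D]
variable {FA : E ⥤ C} {FB : D ⥤ C} {a : Cocone FA} {b : Cocone FB} {f : a.pt ⟶ T.obj b.pt}
variable {κ : Cardinal.{v}}

/-- Key step: given upper bounds of the `E` and `D` parts, produce an element of `GenIdx`
dominating a small family. -/
lemma genIdx_directed (hκ : κ.IsRegular) (hE : IsCardinalDirected κ E)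
    (hD : IsCardinalDirected κ D) (tb : IsColimit b)
    [instT : PreservesColimitsOfShape D T]
    (hpE : ∀ e : E, PreservesColimitsOfShape D (coyoneda.obj (op (FA.obj e)))) :
    IsCardinalDirected κ (GenIdx T FA FB a b f) := by
  haveI : Nonempty D := cardDirected_nonempty hκ hD
  haveI : IsDirected D (· ≤ ·) := cardDirected_isDirected hκ hD
  have tTb : IsColimit (T.mapCocone b) := isColimitOfPreserves T tb
  intro S hS
  -- bound the E-components
  obtain ⟨e₀, he₀⟩ := hE ((fun p : GenIdx T FA FB a b f => p.e) '' S)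
    (lt_of_le_of_lt Cardinal.mk_image_le hS)
  obtain ⟨d₀, hd₀⟩ := hD ((fun p : GenIdx T FA FB a b f => p.d) '' S)
    (lt_of_le_of_lt Cardinal.mk_image_le hS)
  -- factor `a.ι.app e₀ ≫ f` through a stage of `T ∘ FB`
  obtain ⟨d₁, g₁, hg₁⟩ := exists_factor tTb (hpE e₀) (a.ι.app e₀ ≫ f)
  simp only [Functor.mapCocone_ι_app] at hg₁
  obtain ⟨d₂, hd₂₀, hd₂₁⟩ := cardDirected_pair hκ hD d₀ d₁
  set g₂ : FA.obj e₀ ⟶ T.obj (FB.obj d₂) := g₁ ≫ T.map (FB.map (homOfLE hd₂₁)) with hg₂def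
  have hg₂ : g₂ ≫ T.map (b.ι.app d₂) = a.ι.app e₀ ≫ f := by
    rw [hg₂def, Category.assoc, ← Functor.map_comp, Cocone.w, hg₁]
  -- for each s ∈ S, find a stage equalizing the two comparison maps
  have key : ∀ (s : GenIdx T FA FB a b f) (hs : s ∈ S), ∃ (ds : D) (hds : d₂ ≤ ds),
      (FA.map (homOfLE (he₀ _ ⟨s, hs, rfl⟩)) ≫ g₂) ≫ T.map (FB.map (homOfLE hds)) =
      (s.g ≫ T.map (FB.map (homOfLE ((hd₀ _ ⟨s, hs, rfl⟩).trans hd₂₀)))) ≫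
        T.map (FB.map (homOfLE hds)) := by
    intro s hs
    have hse : s.e ≤ e₀ := he₀ _ ⟨s, hs, rfl⟩
    have hsd : s.d ≤ d₂ := (hd₀ _ ⟨s, hs, rfl⟩).trans hd₂₀
    have hcomp : (FA.map (homOfLE hse) ≫ g₂) ≫ (T.mapCocone b).ι.app d₂ =
        (s.g ≫ T.map (FB.map (homOfLE hsd))) ≫ (T.mapCocone b).ι.app d₂ := by
      have h1 : (FA.map (homOfLE hse) ≫ g₂) ≫ T.map (b.ι.app d₂) = a.ι.app s.e ≫ f := by
        rw [Category.assoc, hg₂, ← Category.assoc, Cocone.w]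
      have h2 : (s.g ≫ T.map (FB.map (homOfLE hsd))) ≫ T.map (b.ι.app d₂) =
          a.ι.app s.e ≫ f := by
        rw [Category.assoc, ← Functor.map_comp, Cocone.w, s.w]
      exact h1.trans h2.symm
    obtain ⟨ds, hds, hw⟩ := exists_eq_stage ‹Nonempty D› tTb (hpE s.e) _ _ hcomp
    exact ⟨ds, hds, hw⟩
  choose ds hds hws using key
  -- bound all the equalizing stages
  obtain ⟨dst, hdst⟩ := hD (insert d₂ {x : D | ∃ (s : GenIdx T FA FB a b f) (hs : s ∈ S), x = ds s hs})
    (by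
      refine lt_of_le_of_lt Cardinal.mk_insert_le ?_
      have h1 : Cardinal.mk {x : D | ∃ (s : GenIdx T FA FB a b f) (hs : s ∈ S), x = ds s hs} ≤
          Cardinal.mk S := by
        refine Cardinal.mk_le_of_surjective (f := fun s : S => (⟨ds s s.2 , ⟨s, s.2, rfl⟩⟩ :
          {x : D | ∃ (s : GenIdx T FA FB a b f) (hs : s ∈ S), x = ds s hs})) ?_
        rintro ⟨x, s, hs, rfl⟩
        exact ⟨⟨s, hs⟩, rfl⟩
      refine Cardinal.add_lt_of_lt hκ.aleph0_le (lt_of_le_of_lt h1 hS) ?_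
      exact lt_of_lt_of_le Cardinal.one_lt_aleph0 hκ.aleph0_le)
  have hdst₂ : d₂ ≤ dst := hdst _ (Set.mem_insert _ _)
  refine ⟨⟨e₀, dst, g₂ ≫ T.map (FB.map (homOfLE hdst₂)), ?_⟩, ?_⟩
  · rw [Category.assoc, ← Functor.map_comp, Cocone.w, hg₂]
  · intro s hs
    have hse : s.e ≤ e₀ := he₀ _ ⟨s, hs, rfl⟩
    have hsd : s.d ≤ d₂ := (hd₀ _ ⟨s, hs, rfl⟩).trans hd₂₀
    have hsds : ds s hs ≤ dst := hdst _ (Set.mem_insert_of_mem _ ⟨s, hs, rfl⟩)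
    refine ⟨hse, hsd.trans hdst₂, ?_⟩
    have hw := hws s hs
    simp only [Category.assoc] at hw
    calc s.g ≫ T.map (FB.map (homOfLE (hsd.trans hdst₂)))
        = s.g ≫ T.map (FB.map (homOfLE hsd)) ≫ T.map (FB.map (homOfLE (hds s hs))) ≫
            T.map (FB.map (homOfLE hsds)) := by
          rw [show (homOfLE (hsd.trans hdst₂) : s.d ⟶ dst) =
            homOfLE hsd ≫ homOfLE (hds s hs) ≫ homOfLE hsds from rfl]
          simp only [Functor.map_comp, Category.assoc]
      _ = (s.g ≫ T.map (FB.map (homOfLE hsd)) ≫ T.map (FB.map (homOfLE (hds s hs)))) ≫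
            T.map (FB.map (homOfLE hsds)) := by
          simp only [Category.assoc]
      _ = (FA.map (homOfLE hse) ≫ g₂ ≫ T.map (FB.map (homOfLE (hds s hs)))) ≫
            T.map (FB.map (homOfLE hsds)) := by
          rw [← hw]
      _ = FA.map (homOfLE hse) ≫ g₂ ≫ T.map (FB.map (homOfLE hdst₂)) := by
          rw [Category.assoc, Category.assoc, ← Functor.map_comp, ← Functor.map_comp]
          rfl

variable (T FA FB a b f) in
/-- Projection to `E`. -/
@[simps]
def genProjE : GenIdx T FA FB a b f ⥤ E where
  obj p := p.e
  map h := homOfLE (GenIdx.le_e (leOfHom h))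
  map_id _ := rfl
  map_comp _ _ := rfl

variable (T FA FB a b f) in
/-- Projection to `D`. -/
@[simps]
def genProjD : GenIdx T FA FB a b f ⥤ D where
  obj p := p.d
  map h := homOfLE (GenIdx.le_d (leOfHom h))
  map_id _ := rfl
  map_comp _ _ := rfl

lemma genProjE_final (hκ : κ.IsRegular) (hE : IsCardinalDirected κ E)
    (hD : IsCardinalDirected κ D) (tb : IsColimit b)
    [instT : PreservesColimitsOfShape D T]
    (hpE : ∀ e : E, PreservesColimitsOfShape D (coyoneda.obj (op (FA.obj e))))
    (hP : IsCardinalDirected κ (GenIdx T FA FB a b f)) :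
    (genProjE T FA FB a b f).Final := by
  haveI : Nonempty (GenIdx T FA FB a b f) := cardDirected_nonempty hκ hP
  haveI : IsDirected (GenIdx T FA FB a b f) (· ≤ ·) := cardDirected_isDirected hκ hP
  have tTb : IsColimit (T.mapCocone b) := isColimitOfPreserves T tb
  apply Functor.final_of_exists_of_isFiltered
  · intro e
    obtain ⟨d₁, g₁, hg₁⟩ := exists_factor tTb (hpE e) (a.ι.app e ≫ f)
    simp only [Functor.mapCocone_ι_app] at hg₁
    exact ⟨⟨e, d₁, g₁, hg₁⟩, ⟨homOfLE (le_refl e)⟩⟩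
  · intro e p s s'
    exact ⟨p, 𝟙 p, by apply Subsingleton.elim⟩

lemma genProjD_final (hκ : κ.IsRegular) (hE : IsCardinalDirected κ E)
    (hD : IsCardinalDirected κ D) (tb : IsColimit b)
    [instT : PreservesColimitsOfShape D T]
    (hpE : ∀ e : E, PreservesColimitsOfShape D (coyoneda.obj (op (FA.obj e))))
    (hP : IsCardinalDirected κ (GenIdx T FA FB a b f)) :
    (genProjD T FA FB a b f).Final := by
  haveI : Nonempty (GenIdx T FA FB a b f) := cardDirected_nonempty hκ hP
  haveI : IsDirected (GenIdx T FA FB a b f) (· ≤ ·) := cardDirected_isDirected hκ hP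
  have tTb : IsColimit (T.mapCocone b) := isColimitOfPreserves T tb
  apply Functor.final_of_exists_of_isFiltered
  · intro d
    obtain ⟨e₀⟩ := cardDirected_nonempty hκ hE
    obtain ⟨d₁, g₁, hg₁⟩ := exists_factor tTb (hpE e₀) (a.ι.app e₀ ≫ f)
    simp only [Functor.mapCocone_ι_app] at hg₁
    obtain ⟨d₂, hd₂, hd₂'⟩ := cardDirected_pair hκ hD d d₁
    refine ⟨⟨e₀, d₂, g₁ ≫ T.map (FB.map (homOfLE hd₂')), ?_⟩, ⟨homOfLE hd₂⟩⟩
    rw [Category.assoc, ← Functor.map_comp, Cocone.w, hg₁]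
  · intro d p s s'
    exact ⟨p, 𝟙 p, by apply Subsingleton.elim⟩

variable (T FA FB a b f) in
/-- Cocone on the left components. -/
@[simps]
def genLeftCocone (s : Cocone (genDiagram T FA FB a b f)) :
    Cocone (genProjE T FA FB a b f ⋙ FA) where
  pt := s.pt.left
  ι :=
    { app := fun p => (s.ι.app p).left
      naturality := fun p q h => by
        have := congrArg CommaMorphism.left (s.ι.naturality h)
        simp [genDiagram] at this
        exact this.trans (Category.comp_id _).symm }

variable (T FA FB a b f) in
/-- Cocone on the right components. -/
@[simps]
def genRightCocone (s : Cocone (genDiagram T FA FB a b f)) :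
    Cocone (genProjD T FA FB a b f ⋙ FB) where
  pt := s.pt.right
  ι :=
    { app := fun p => (s.ι.app p).right
      naturality := fun p q h => by
        have := congrArg CommaMorphism.right (s.ι.naturality h)
        simp [genDiagram] at this
        exact this.trans (Category.comp_id _).symm }

/-- The canonical cocone is a colimit. -/
noncomputable def genCocone_isColimit (ta : IsColimit a) (tb : IsColimit b)
    (hfinE : (genProjE T FA FB a b f).Final) (hfinD : (genProjD T FA FB a b f).Final) :
    IsColimit (genCocone T FA FB a b f) := by
  haveI := hfinE
  haveI := hfinD
  have ta' : IsColimit (a.whisker (genProjE T FA FB a b f)) :=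
    (Functor.Final.isColimitWhiskerEquiv _ _).symm ta
  have tb' : IsColimit (b.whisker (genProjD T FA FB a b f)) :=
    (Functor.Final.isColimitWhiskerEquiv _ _).symm tb
  refine
    { desc := fun s =>
        { left := ta'.desc (genLeftCocone T FA FB a b f s)
          right := tb'.desc (genRightCocone T FA FB a b f s)
          w := ?_ }
      fac := fun s p => ?_
      uniq := fun s m hm => ?_ }
  · dsimp only [genCocone]
    change @CategoryStruct.comp C _ a.pt s.pt.left (T.obj s.pt.right)
        (ta'.desc (genLeftCocone T FA FB a b f s)) s.pt.hom =
      @CategoryStruct.comp C _ a.pt (T.obj b.pt) (T.obj s.pt.right)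
        f (T.map (X := b.pt) (Y := s.pt.right) (tb'.desc (genRightCocone T FA FB a b f s)))
    apply ta'.hom_ext
    intro p
    have hfacL : a.ι.app p.e ≫ ta'.desc (genLeftCocone T FA FB a b f s) =
        (s.ι.app p).left := by
      exact ta'.fac (genLeftCocone T FA FB a b f s) p
    have hfacR : b.ι.app p.d ≫ tb'.desc (genRightCocone T FA FB a b f s) =
        (s.ι.app p).right := by
      exact tb'.fac (genRightCocone T FA FB a b f s) p
    have hw : (s.ι.app p).left ≫ s.pt.hom = p.g ≫ T.map (s.ι.app p).right := by
      have := (s.ι.app p).w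
      simpa [genDiagram] using this
    simp only [Cocone.whisker_ι, Functor.whiskerLeft_app, Functor.const_obj_obj, genProjE_obj]
    have key : (s.ι.app p).left ≫ s.pt.hom =
        (a.ι.app p.e ≫ f) ≫ T.map (tb'.desc (genRightCocone T FA FB a b f s)) := by
      rw [hw, ← hfacR, ← p.w, Category.assoc, ← Functor.map_comp]
      rfl
    rw [← hfacL] at key
    exact (Category.assoc _ _ _).symm.trans (key.trans (Category.assoc _ _ _))
  · apply CommaMorphism.ext
    · exact ta'.fac (genLeftCocone T FA FB a b f s) p
    · exact tb'.fac (genRightCocone T FA FB a b f s) p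
  · apply CommaMorphism.ext
    · refine ta'.uniq (genLeftCocone T FA FB a b f s) m.left fun p => ?_
      exact congrArg CommaMorphism.left (hm p)
    · refine tb'.uniq (genRightCocone T FA FB a b f s) m.right fun p => ?_
      exact congrArg CommaMorphism.right (hm p)


end GenMain

section Pres
variable {C : Type u} [Category.{v} C] {T : C ⥤ C}
variable {J : Type v} [Category.{v} J]

noncomputable def commaFstIsColimit [HasColimitsOfShape J C] {F : J ⥤ Comma (𝟭 C) T}
    {c : Cocone F} (hc : IsColimit c) : IsColimit ((Comma.fst (𝟭 C) T).mapCocone c) := by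
  have t₁ := colimit.isColimit (F ⋙ Comma.fst (𝟭 C) T)
  have t₂ := colimit.isColimit (F ⋙ Comma.snd (𝟭 C) T)
  have hc' := Comma.coconeOfPreservesIsColimit F t₁ t₂
  have e : c ≅ Comma.coconeOfPreserves F t₁ (colimit.cocone _) := hc.uniqueUpToIso hc'
  refine IsColimit.ofIsoColimit ?_ ((Cocones.functoriality F (Comma.fst (𝟭 C) T)).mapIso e).symm
  exact IsColimit.ofIsoColimit t₁ (Cocones.ext (Iso.refl _) (by intro j; exact Category.comp_id _))

noncomputable def commaSndIsColimit [HasColimitsOfShape J C] {F : J ⥤ Comma (𝟭 C) T}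
    {c : Cocone F} (hc : IsColimit c) : IsColimit ((Comma.snd (𝟭 C) T).mapCocone c) := by
  have t₁ := colimit.isColimit (F ⋙ Comma.fst (𝟭 C) T)
  have t₂ := colimit.isColimit (F ⋙ Comma.snd (𝟭 C) T)
  have hc' := Comma.coconeOfPreservesIsColimit F t₁ t₂
  have e : c ≅ Comma.coconeOfPreserves F t₁ (colimit.cocone _) := hc.uniqueUpToIso hc'
  refine IsColimit.ofIsoColimit ?_ ((Cocones.functoriality F (Comma.snd (𝟭 C) T)).mapIso e).symm
  exact IsColimit.ofIsoColimit t₂ (Cocones.ext (Iso.refl _) (by intro j; exact Category.comp_id _))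

lemma comma_presentable_shape {κ : Cardinal.{v}} {D : Type v} [PartialOrder D]
    (hκ : κ.IsRegular) (hD : IsCardinalDirected κ D) [HasColimitsOfShape D C]
    [instT : PreservesColimitsOfShape D T]
    (X : Comma (𝟭 C) T)
    (iL : PreservesColimitsOfShape D (coyoneda.obj (op X.left)))
    (iR : PreservesColimitsOfShape D (coyoneda.obj (op X.right)))
    (iTR : PreservesColimitsOfShape D (coyoneda.obj (op (T.obj X.right)))) :
    PreservesColimitsOfShape D (coyoneda.obj (op X)) := by
  haveI : Nonempty D := cardDirected_nonempty hκ hD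
  haveI : IsDirected D (· ≤ ·) := cardDirected_isDirected hκ hD
  constructor
  intro F
  constructor
  intro c hc
  have tL := commaFstIsColimit hc
  have tR := commaSndIsColimit hc
  have tTR : IsColimit (T.mapCocone ((Comma.snd (𝟭 C) T).mapCocone c)) :=
    isColimitOfPreserves T tR
  constructor
  apply Types.FilteredColimit.isColimitOf
  · -- joint surjectivity
    intro x
    obtain ⟨d₁, vL, hvL⟩ := exists_factor tL iL (CommaMorphism.left x)
    obtain ⟨d₂, vR, hvR⟩ := exists_factor tR iR (CommaMorphism.right x)
    have hvL' : vL ≫ (c.ι.app d₁).left = x.left := hvL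
    have hvR' : vR ≫ (c.ι.app d₂).right = x.right := hvR
    obtain ⟨d, hd₁, hd₂⟩ := cardDirected_pair hκ hD d₁ d₂
    obtain ⟨uL, huLdef⟩ : ∃ u, u = vL ≫ (F.map (homOfLE hd₁)).left := ⟨_, rfl⟩
    obtain ⟨uR, huRdef⟩ : ∃ u, u = vR ≫ (F.map (homOfLE hd₂)).right := ⟨_, rfl⟩
    have huL : uL ≫ (c.ι.app d).left = x.left := by
      rw [huLdef, Category.assoc, ← hvL']
      congr 1
      exact congrArg CommaMorphism.left (c.w (homOfLE hd₁))
    have huR : uR ≫ (c.ι.app d).right = x.right := by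
      rw [huRdef, Category.assoc, ← hvR']
      congr 1
      exact congrArg CommaMorphism.right (c.w (homOfLE hd₂))
    have hw : (c.ι.app d).left ≫ c.pt.hom = (F.obj d).hom ≫ T.map ((c.ι.app d).right) := by
      have := (c.ι.app d).w
      simpa using this
    have hxw : x.left ≫ c.pt.hom = X.hom ≫ T.map x.right := by
      have := x.w
      simpa using this
    have hpq : (X.hom ≫ T.map uR) ≫ T.map ((c.ι.app d).right) =
        (uL ≫ (F.obj d).hom) ≫ T.map ((c.ι.app d).right) := by
      calc (X.hom ≫ T.map uR) ≫ T.map ((c.ι.app d).right)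
          = X.hom ≫ T.map (uR ≫ (c.ι.app d).right) := by
            rw [Functor.map_comp, Category.assoc]
        _ = X.hom ≫ T.map x.right := by rw [huR]
        _ = x.left ≫ c.pt.hom := hxw.symm
        _ = (uL ≫ (c.ι.app d).left) ≫ c.pt.hom := by rw [huL]
        _ = uL ≫ ((c.ι.app d).left ≫ c.pt.hom) := by rw [Category.assoc]
        _ = uL ≫ ((F.obj d).hom ≫ T.map ((c.ι.app d).right)) := by rw [hw]
        _ = (uL ≫ (F.obj d).hom) ≫ T.map ((c.ι.app d).right) := by rw [Category.assoc]
    obtain ⟨d', hdd', heq⟩ := exists_eq_stage ‹Nonempty D› tTR iL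
      (X.hom ≫ T.map uR) (uL ≫ (F.obj d).hom) hpq
    have heq' : (X.hom ≫ T.map uR) ≫ T.map ((F.map (homOfLE hdd')).right) =
        (uL ≫ (F.obj d).hom) ≫ T.map ((F.map (homOfLE hdd')).right) := heq
    refine ⟨d', ⟨uL ≫ (F.map (homOfLE hdd')).left, uR ≫ (F.map (homOfLE hdd')).right, ?_⟩, ?_⟩
    · -- the comma square
      have hFw : (F.map (homOfLE hdd')).left ≫ (F.obj d').hom =
          (F.obj d).hom ≫ T.map ((F.map (homOfLE hdd')).right) := by
        have := (F.map (homOfLE hdd')).w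
        simpa using this
      show (𝟭 C).map _ ≫ (F.obj d').hom = X.hom ≫ T.map _
      simp only [Functor.id_map]
      rw [Category.assoc, hFw, ← Category.assoc, ← heq', Category.assoc, ← Functor.map_comp]
    · -- it maps to x
      apply CommaMorphism.ext
      · have h1 : (uL ≫ (F.map (homOfLE hdd')).left) ≫ (c.ι.app d').left = x.left := by
          rw [Category.assoc, ← huL]
          congr 1
          exact congrArg CommaMorphism.left (c.w (homOfLE hdd'))
        exact h1.symm
      · have h1 : (uR ≫ (F.map (homOfLE hdd')).right) ≫ (c.ι.app d').right = x.right := by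
          rw [Category.assoc, ← huR]
          congr 1
          exact congrArg CommaMorphism.right (c.w (homOfLE hdd'))
        exact h1.symm
  · -- joint injectivity
    intro i j xi xj hij
    obtain ⟨k, hik, hjk⟩ := cardDirected_pair hκ hD i j
    have hk : (xi ≫ F.map (homOfLE hik)) ≫ c.ι.app k =
        (xj ≫ F.map (homOfLE hjk)) ≫ c.ι.app k := by
      rw [Category.assoc, Category.assoc, c.w, c.w]
      exact hij
    have hkL : ((xi ≫ F.map (homOfLE hik)).left) ≫ (c.ι.app k).left =
        ((xj ≫ F.map (homOfLE hjk)).left) ≫ (c.ι.app k).left :=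
      congrArg CommaMorphism.left hk
    have hkR : ((xi ≫ F.map (homOfLE hik)).right) ≫ (c.ι.app k).right =
        ((xj ≫ F.map (homOfLE hjk)).right) ≫ (c.ι.app k).right :=
      congrArg CommaMorphism.right hk
    obtain ⟨k₁, hkk₁, heqL⟩ := exists_eq_stage ‹Nonempty D› tL iL _ _ hkL
    obtain ⟨k₂, hkk₂, heqR⟩ := exists_eq_stage ‹Nonempty D› tR iR _ _ hkR
    obtain ⟨k', hk₁, hk₂⟩ := cardDirected_pair hκ hD k₁ k₂
    refine ⟨k', homOfLE (hik.trans (hkk₁.trans hk₁)), homOfLE (hjk.trans (hkk₁.trans hk₁)), ?_⟩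
    show xi ≫ F.map _ = xj ≫ F.map _
    apply CommaMorphism.ext
    · have heqL' : (xi ≫ F.map (homOfLE hik)).left ≫ (F.map (homOfLE hkk₁)).left =
          (xj ≫ F.map (homOfLE hjk)).left ≫ (F.map (homOfLE hkk₁)).left := heqL
      have heqL'' := heqL' =≫ (F.map (homOfLE hk₁)).left
      simp only [Comma.comp_left, Category.assoc] at heqL''
      have hdecompi : (homOfLE (hik.trans (hkk₁.trans hk₁)) : i ⟶ k') =
          homOfLE hik ≫ homOfLE hkk₁ ≫ homOfLE hk₁ := rfl
      have hdecompj : (homOfLE (hjk.trans (hkk₁.trans hk₁)) : j ⟶ k') =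
          homOfLE hjk ≫ homOfLE hkk₁ ≫ homOfLE hk₁ := rfl
      rw [hdecompi, hdecompj]
      simp only [Functor.map_comp, Comma.comp_left, Category.assoc]
      exact heqL''
    · have heqR' : (xi ≫ F.map (homOfLE hik)).right ≫ (F.map (homOfLE hkk₂)).right =
          (xj ≫ F.map (homOfLE hjk)).right ≫ (F.map (homOfLE hkk₂)).right := heqR
      have heqR'' := heqR' =≫ (F.map (homOfLE hk₂)).right
      simp only [Comma.comp_right, Category.assoc] at heqR''
      have hdecompi : (homOfLE (hik.trans (hkk₁.trans hk₁)) : i ⟶ k') =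
          homOfLE hik ≫ homOfLE hkk₂ ≫ homOfLE hk₂ := rfl
      have hdecompj : (homOfLE (hjk.trans (hkk₁.trans hk₁)) : j ⟶ k') =
          homOfLE hjk ≫ homOfLE hkk₂ ≫ homOfLE hk₂ := rfl
      rw [hdecompi, hdecompj]
      simp only [Functor.map_comp, Comma.comp_right, Category.assoc]
      exact heqR''

lemma small_commaGen {C : Type u} [Category.{v} C] (T : C ⥤ C) (G₀ : Set C)
    [hs : Small.{v} G₀] :
    Small.{v} {X : Comma (𝟭 C) T | X.left ∈ G₀ ∧ X.right ∈ G₀} := by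
  let Φ : {X : Comma (𝟭 C) T | X.left ∈ G₀ ∧ X.right ∈ G₀} →
      Σ ab : G₀ × G₀, ((ab.1 : C) ⟶ T.obj (ab.2 : C)) :=
    fun X => ⟨(⟨X.1.left, X.2.1⟩, ⟨X.1.right, X.2.2⟩), X.1.hom⟩
  have hinj : Function.Injective Φ := by
    rintro ⟨⟨A, B, f⟩, hA, hB⟩ ⟨⟨A', B', f'⟩, hA', hB'⟩ h
    obtain ⟨h1, h2⟩ := Sigma.mk.inj_iff.1 h
    obtain ⟨hab1, hab2⟩ := Prod.ext_iff.1 h1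
    obtain rfl : A = A' := congrArg Subtype.val hab1
    obtain rfl : B = B' := congrArg Subtype.val hab2
    obtain rfl : f = f' := eq_of_heq h2
    rfl
  exact small_of_injective hinj

end Pres

end Scratch

variable (C : Type u) [Category.{v} C]

/-- If `𝒜` is locally `κ`-presentable and `T : 𝒜 ⥤ 𝒜` preserves `κ`-presentable objects
and `κ`-directed colimits, then the comma category `𝒜/T = Id ↓ T` is locally
`κ`-presentable. -/
theorem comma_id_isLocallyPresentable (κ : Cardinal.{v}) (hκ : κ.IsRegular)
    (h : IsLocallyPresentable C κ) (T : C ⥤ C)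
    (hT : PreservesCardinalDirectedColimits C κ T)
    (hTpres : ∀ X : C, IsPresentableObj C κ X → IsPresentableObj C κ (T.obj X)) :
    IsLocallyPresentable (Comma (𝟭 C) T) κ := by
  open Scratch in
  obtain ⟨hcolim, G₀, hsmall, hpres, hgen⟩ := h
  haveI := hcolim
  refine ⟨inferInstance, {X : Comma (𝟭 C) T | X.left ∈ G₀ ∧ X.right ∈ G₀}, ?_, ?_, ?_⟩
  · haveI := hsmall
    exact small_commaGen T G₀
  · -- presentability of the generators
    rintro X ⟨hXl, hXr⟩ D _ hD
    haveI : PreservesColimitsOfShape D T := (hT D hD).some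
    exact ⟨comma_presentable_shape hκ hD X ((hpres _ hXl D hD).some)
      ((hpres _ hXr D hD).some) ((hTpres X.right (hpres _ hXr) D hD).some)⟩
  · -- generation
    rintro ⟨A, B, f⟩
    obtain ⟨E, instE, hE, FA, a, hGA, hpta, ⟨ta⟩⟩ := hgen A
    obtain ⟨D, instD, hD, FB, b, hGB, hptb, ⟨tb⟩⟩ := hgen B
    subst hpta
    subst hptb
    haveI : PreservesColimitsOfShape D T := (hT D hD).some
    have hpE : ∀ e : E, PreservesColimitsOfShape D (coyoneda.obj (op (FA.obj e))) :=
      fun e => (hpres _ (hGA e) D hD).some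
    have hP : IsCardinalDirected κ (GenIdx T FA FB a b f) :=
      genIdx_directed hκ hE hD tb hpE
    refine ⟨GenIdx T FA FB a b f, inferInstance, hP,
      genDiagram T FA FB a b f, genCocone T FA FB a b f, ?_, rfl, ?_⟩
    · intro p
      exact ⟨hGA p.e, hGB p.d⟩
    · exact ⟨genCocone_isColimit ta tb
        (genProjE_final hκ hE hD tb hpE hP) (genProjD_final hκ hE hD tb hpE hP)⟩
end
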